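/- (BPR equilibrium characterization.) Assume d_A ≠ 0 and d_B ≠ 0. A profile (α_A*, α_B*) with α_A*, α_B* ∈ (0,1) is a Nash equilibrium of the digital representative game if and only if it satisfies the pair of first-order conditions f_A(α_A*) = h_A(α_B*) and f_B(α_B*) = h_B(α_A*). -/

import Mathlib

open Set Filter

/-- Team decision formed by the two digital representatives. -/
noncomputable def teamDec (lam : ℝ → ℝ) (thA thB mu : ℝ) (aA aB : ℝ) : ℝ :=
  (lam aA * thA + (1 - lam aA) * mu + lam aB * thB + (1 - lam aB) * mu) / 2

/-- Alice's total loss: preference loss plus communication cost. -/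
noncomputable def lossA (lam c : ℝ → ℝ) (thA thB mu : ℝ) (aA aB : ℝ) : ℝ :=
  (thA - teamDec lam thA thB mu aA aB) ^ 2 + c aA

/-- Bob's total loss: preference loss plus communication cost. -/
noncomputable def lossB (lam c : ℝ → ℝ) (thA thB mu : ℝ) (aA aB : ℝ) : ℝ :=
  (thB - teamDec lam thA thB mu aA aB) ^ 2 + c aB

/-- The function `f_m(α) = λ(α) + (2/d_m²)·c'(α)/λ'(α)`. -/
noncomputable def fFun (lam lam' c' : ℝ → ℝ) (d : ℝ) (α : ℝ) : ℝ :=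
  lam α + (2 / d ^ 2) * (c' α / lam' α)

/-- The function `h_m(α) = 2 − λ(α)·d_{−m}/d_m`. -/
noncomputable def hFun (lam : ℝ → ℝ) (dm dOther : ℝ) (α : ℝ) : ℝ :=
  2 - lam α * dOther / dm

/-- `a` is a best response of Alice to Bob's revelation `aB`:
it minimizes `α ↦ L_A(α, aB)` over `[0,1)`. -/
def IsBestRespA (lam c : ℝ → ℝ) (thA thB mu : ℝ) (a aB : ℝ) : Prop :=
  a ∈ Set.Ico (0:ℝ) 1 ∧
    ∀ x ∈ Set.Ico (0:ℝ) 1, lossA lam c thA thB mu a aB ≤ lossA lam c thA thB mu x aB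

/-- Nash equilibrium of the digital representative game. -/
def IsNashEq (lam c : ℝ → ℝ) (thA thB mu : ℝ) (aA aB : ℝ) : Prop :=
  aA ∈ Set.Ico (0:ℝ) 1 ∧ aB ∈ Set.Ico (0:ℝ) 1 ∧
  (∀ α ∈ Set.Ico (0:ℝ) 1, lossA lam c thA thB mu aA aB ≤ lossA lam c thA thB mu α aB) ∧
  (∀ α ∈ Set.Ico (0:ℝ) 1, lossB lam c thA thB mu aA aB ≤ lossB lam c thA thB mu aA α)


lemma BPR_key (lam lam' c c' : ℝ → ℝ)
    (hlamDeriv : ∀ α ∈ Set.Icc (0:ℝ) 1, HasDerivAt lam (lam' α) α)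
    (hlam'pos : ∀ α ∈ Set.Icc (0:ℝ) 1, 0 < lam' α)
    (hlam'anti : ∀ x ∈ Set.Icc (0:ℝ) 1, ∀ y ∈ Set.Icc (0:ℝ) 1, x ≤ y → lam' y ≤ lam' x)
    (hcDeriv : ∀ α ∈ Set.Ico (0:ℝ) 1, HasDerivAt c (c' α) α)
    (hc'nonneg : ∀ α ∈ Set.Ico (0:ℝ) 1, 0 ≤ c' α)
    (hc'mono : ∀ x ∈ Set.Ico (0:ℝ) 1, ∀ y ∈ Set.Ico (0:ℝ) 1, x < y → c' x < c' y)
    (d s : ℝ) (hd : d ≠ 0) (a : ℝ) (ha : a ∈ Set.Ioo (0:ℝ) 1) :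
    (∀ x ∈ Set.Ico (0:ℝ) 1,
        (((2 - lam a) * d - s) / 2) ^ 2 + c a ≤ (((2 - lam x) * d - s) / 2) ^ 2 + c x)
      ↔ lam a + (2 / d ^ 2) * (c' a / lam' a) = 2 - s / d := by
  set F : ℝ → ℝ := fun x => (((2 - lam x) * d - s) / 2) ^ 2 + c x with hF
  have haI : a ∈ Set.Ico (0:ℝ) 1 := ⟨ha.1.le, ha.2⟩
  have hFderiv : ∀ x ∈ Set.Ico (0:ℝ) 1,
      HasDerivAt F (c' x - ((2 - lam x) * d - s) * lam' x * d / 2) x := by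
    intro x hx
    have h1 := ((((hlamDeriv x ⟨hx.1, hx.2.le⟩).const_sub 2).mul_const d).sub_const s).div_const 2
    have h2 := (h1.pow 2).add (hcDeriv x hx)
    refine h2.congr_deriv ?_
    norm_num; ring
  -- FOC equivalence
  have hl'pos : 0 < lam' a := hlam'pos a ⟨ha.1.le, ha.2.le⟩
  have hfoc : (c' a - ((2 - lam a) * d - s) * lam' a * d / 2 = 0)
      ↔ lam a + (2 / d ^ 2) * (c' a / lam' a) = 2 - s / d := by
    rw [sub_eq_zero]
    constructor
    · intro h
      field_simp
      linear_combination 2 * h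
    · intro h
      field_simp at h
      apply mul_right_cancel₀ hd
      linear_combination (d / 2) * h
  constructor
  · intro hmin
    have hloc : IsLocalMin F a := by
      filter_upwards [Ioo_mem_nhds ha.1 ha.2] with x hx
      exact hmin x ⟨hx.1.le, hx.2⟩
    exact hfoc.mp (hloc.hasDerivAt_eq_zero (hFderiv a haI))
  · intro heq
    have h0 : c' a - ((2 - lam a) * d - s) * lam' a * d / 2 = 0 := hfoc.mpr heq
    have hGa : 0 ≤ ((2 - lam a) * d - s) * d := by
      have hca := hc'nonneg a haI
      nlinarith [hl'pos]
    -- lam is monotone on [0,1]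
    have hlamMono : MonotoneOn lam (Set.Icc (0:ℝ) 1) := by
      apply monotoneOn_of_deriv_nonneg (convex_Icc 0 1)
      · exact fun x hx => (hlamDeriv x hx).continuousAt.continuousWithinAt
      · intro x hx
        rw [interior_Icc] at hx
        exact ((hlamDeriv x ⟨hx.1.le, hx.2.le⟩).differentiableAt).differentiableWithinAt
      · intro x hx
        rw [interior_Icc] at hx
        rw [(hlamDeriv x ⟨hx.1.le, hx.2.le⟩).deriv]
        exact (hlam'pos x ⟨hx.1.le, hx.2.le⟩).le
    intro x hx
    rcases le_or_gt x a with hxa | hax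
    · -- F antitone on [x, a] ⊆ [0,1)
      have hanti : AntitoneOn F (Set.Icc x a) := by
        apply antitoneOn_of_deriv_nonpos (convex_Icc x a)
        · intro t ht
          exact (hFderiv t ⟨le_trans hx.1 ht.1, lt_of_le_of_lt ht.2 ha.2⟩).continuousAt.continuousWithinAt
        · intro t ht
          rw [interior_Icc] at ht
          exact (hFderiv t ⟨le_trans hx.1 ht.1.le, lt_trans ht.2 ha.2⟩).differentiableAt.differentiableWithinAt
        · intro t ht
          rw [interior_Icc] at ht
          have htI : t ∈ Set.Ico (0:ℝ) 1 := ⟨le_trans hx.1 ht.1.le, lt_trans ht.2 ha.2⟩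
          rw [(hFderiv t htI).deriv]
          have hct : c' t ≤ c' a := (hc'mono t htI a haI ht.2).le
          have hlt : lam t ≤ lam a :=
            hlamMono ⟨htI.1, htI.2.le⟩ ⟨ha.1.le, ha.2.le⟩ ht.2.le
          have hl't : lam' a ≤ lam' t :=
            hlam'anti t ⟨htI.1, htI.2.le⟩ a ⟨ha.1.le, ha.2.le⟩ ht.2.le
          have hl'tpos : 0 < lam' t := hlam'pos t ⟨htI.1, htI.2.le⟩
          -- G t ≥ G a ≥ 0, lam' t ≥ lam' a > 0 so product ≥
          have hGt : ((2 - lam a) * d - s) * d ≤ ((2 - lam t) * d - s) * d := by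
            nlinarith [sq_nonneg d]
          nlinarith [mul_le_mul hl't hGt hGa hl'tpos.le]
      calc F a ≤ F x := hanti ⟨le_refl x, hxa⟩ ⟨hxa, le_refl a⟩ hxa
        _ = F x := rfl
    · -- F monotone on [a, x]
      have hmono : MonotoneOn F (Set.Icc a x) := by
        apply monotoneOn_of_deriv_nonneg (convex_Icc a x)
        · intro t ht
          exact (hFderiv t ⟨le_trans ha.1.le ht.1, lt_of_le_of_lt ht.2 hx.2⟩).continuousAt.continuousWithinAt
        · intro t ht
          rw [interior_Icc] at ht
          exact (hFderiv t ⟨le_trans ha.1.le ht.1.le, lt_trans ht.2 hx.2⟩).differentiableAt.differentiableWithinAt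
        · intro t ht
          rw [interior_Icc] at ht
          have htI : t ∈ Set.Ico (0:ℝ) 1 := ⟨le_trans ha.1.le ht.1.le, lt_trans ht.2 hx.2⟩
          rw [(hFderiv t htI).deriv]
          have hct : c' a ≤ c' t := (hc'mono a haI t htI ht.1).le
          have hlt : lam a ≤ lam t :=
            hlamMono ⟨ha.1.le, ha.2.le⟩ ⟨htI.1, htI.2.le⟩ ht.1.le
          have hl't : lam' t ≤ lam' a :=
            hlam'anti a ⟨ha.1.le, ha.2.le⟩ t ⟨htI.1, htI.2.le⟩ ht.1.le
          have hl'tpos : 0 < lam' t := hlam'pos t ⟨htI.1, htI.2.le⟩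
          have hGt : ((2 - lam t) * d - s) * d ≤ ((2 - lam a) * d - s) * d := by
            nlinarith [sq_nonneg d]
          rcases le_or_gt 0 (((2 - lam t) * d - s) * d) with hpos | hneg
          · nlinarith [mul_le_mul hGt hl't hl'tpos.le hGa]
          · nlinarith [mul_pos hl'tpos (neg_pos.mpr hneg)]
      exact hmono ⟨le_refl a, hax.le⟩ ⟨hax.le, le_refl x⟩ hax.le

theorem BPR_equilibrium_iff
    (lam lam' c c' : ℝ → ℝ)
    (hlamDeriv : ∀ α ∈ Set.Icc (0:ℝ) 1, HasDerivAt lam (lam' α) α)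
    (hlam'Cont : ContinuousOn lam' (Set.Icc (0:ℝ) 1))
    (hlam0 : lam 0 = 0) (hlam1 : lam 1 = 1)
    (hlam'pos : ∀ α ∈ Set.Icc (0:ℝ) 1, 0 < lam' α)
    (hlam'anti : ∀ x ∈ Set.Icc (0:ℝ) 1, ∀ y ∈ Set.Icc (0:ℝ) 1, x ≤ y → lam' y ≤ lam' x)
    (hcDeriv : ∀ α ∈ Set.Ico (0:ℝ) 1, HasDerivAt c (c' α) α)
    (hc'Cont : ContinuousOn c' (Set.Ico (0:ℝ) 1))
    (hc0 : c 0 = 0)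
    (hc'nonneg : ∀ α ∈ Set.Ico (0:ℝ) 1, 0 ≤ c' α)
    (hc'strictMono : ∀ x ∈ Set.Ico (0:ℝ) 1, ∀ y ∈ Set.Ico (0:ℝ) 1, x < y → c' x < c' y)
    (hc'top : Filter.Tendsto c' (nhdsWithin 1 (Set.Iio 1)) Filter.atTop)
    (thA thB muG dA dB : ℝ)
    (hdA : dA = thA - muG) (hdB : dB = thB - muG)
    (hdAne : dA ≠ 0) (hdBne : dB ≠ 0)
    (aA aB : ℝ) (haA : aA ∈ Set.Ioo (0:ℝ) 1) (haB : aB ∈ Set.Ioo (0:ℝ) 1) :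
    IsNashEq lam c thA thB muG aA aB ↔
      (fFun lam lam' c' dA aA = hFun lam dA dB aB ∧
       fFun lam lam' c' dB aB = hFun lam dB dA aA) := by
  have hthA : thA = muG + dA := by rw [hdA]; ring
  have hthB : thB = muG + dB := by rw [hdB]; ring
  subst hthA hthB
  have eqA : ∀ x, lossA lam c (muG + dA) (muG + dB) muG x aB
      = (((2 - lam x) * dA - lam aB * dB) / 2) ^ 2 + c x := by
    intro x; simp only [lossA, teamDec]; ring
  have eqB : ∀ x, lossB lam c (muG + dA) (muG + dB) muG aA x
      = (((2 - lam x) * dB - lam aA * dA) / 2) ^ 2 + c x := by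
    intro x; simp only [lossB, teamDec]; ring
  have keyA := BPR_key lam lam' c c' hlamDeriv hlam'pos hlam'anti hcDeriv hc'nonneg
      hc'strictMono dA (lam aB * dB) hdAne aA haA
  have keyB := BPR_key lam lam' c c' hlamDeriv hlam'pos hlam'anti hcDeriv hc'nonneg
      hc'strictMono dB (lam aA * dA) hdBne aB haB
  constructor
  · rintro ⟨-, -, hA, hB⟩
    constructor
    · have := keyA.mp (fun x hx => by rw [← eqA aA, ← eqA x]; exact hA x hx)
      simpa [fFun, hFun, mul_div_assoc] using this
    · have := keyB.mp (fun x hx => by rw [← eqB aB, ← eqB x]; exact hB x hx)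
      simpa [fFun, hFun, mul_div_assoc] using this
  · rintro ⟨h1, h2⟩
    refine ⟨⟨haA.1.le, haA.2⟩, ⟨haB.1.le, haB.2⟩, ?_, ?_⟩
    · intro x hx
      rw [eqA aA, eqA x]
      exact keyA.mpr (by simpa [fFun, hFun, mul_div_assoc] using h1) x hx
    · intro x hx
      rw [eqB aB, eqB x]
      exact keyB.mpr (by simpa [fFun, hFun, mul_div_assoc] using h2) x hx
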